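/- Let e ∈ 𝔽(r₁,r₂), let τ ∈ 𝓘, and let U be the syndrome table afforded by τ and e. Fix a monomial order ≤_T on ℕ×ℕ. Then the image of Λ(U) under the canonical projection L[X₁,X₂] → L(r₁,r₂) equals the locator ideal L(e); that is, Λ(U)‾ = {f ∈ L(r₁,r₂) : f(α^n) = 0 for all n ∈ supp(e)}. -/

import Mathlib

/-- A monomial order on ℕ × ℕ: a linear order compatible with addition
for which (0,0) is the least element. -/
structure MonOrd where
  le : ℕ × ℕ → ℕ × ℕ → Prop
  refl : ∀ a, le a a
  trans : ∀ a b c, le a b → le b c → le a c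
  antisymm : ∀ a b, le a b → le b a → a = b
  total : ∀ a b, le a b ∨ le b a
  add_right : ∀ a b c, le a b → le (a + c) (b + c)
  zero_le : ∀ a, le (0, 0) a

/-- Strict version of a monomial order. -/
def MonOrd.lt (T : MonOrd) (a b : ℕ × ℕ) : Prop := T.le a b ∧ a ≠ b

/-- `s` is the leading power product exponent of `f` w.r.t. `T`. -/
def IsLP {L : Type} [Field L] (T : MonOrd) (f : (ℕ × ℕ) →₀ L) (s : ℕ × ℕ) : Prop :=
  s ∈ f.support ∧ ∀ m ∈ f.support, T.le m s

/-- `f[U]_n`, computed with respect to a given leading exponent `s` of `f`. -/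
noncomputable def fApp {L : Type} [Field L] (U : ℕ × ℕ → L) (f : (ℕ × ℕ) →₀ L)
    (s n : ℕ × ℕ) : L :=
  if s.1 ≤ n.1 ∧ s.2 ≤ n.2 then
    ∑ m ∈ f.support, f m * U (m.1 + n.1 - s.1, m.2 + n.2 - s.2)
  else 0

/-- `f` generates the doubly periodic array `U`. -/
def GeneratesU {L : Type} [Field L] (T : MonOrd) (U : ℕ × ℕ → L) (f : (ℕ × ℕ) →₀ L) : Prop :=
  ∃ s, IsLP T f s ∧ ∀ n, fApp U f s n = 0

/-- `f` generates the finite subarray `u^l` of `U`. -/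
def GeneratesUpTo {L : Type} [Field L] (T : MonOrd) (U : ℕ × ℕ → L) (l : ℕ × ℕ)
    (f : (ℕ × ℕ) →₀ L) : Prop :=
  ∃ s, IsLP T f s ∧ ∀ k, s.1 ≤ k.1 → s.2 ≤ k.2 → T.lt k l → fApp U f s k = 0

/-- `U` is a doubly periodic array of period r₁ × r₂. -/
def DoublyPeriodic {L : Type} (r₁ r₂ : ℕ) (U : ℕ × ℕ → L) : Prop :=
  ∀ n m : ℕ × ℕ, n.1 % r₁ = m.1 % r₁ → n.2 % r₂ = m.2 % r₂ → U n = U m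

/-- Evaluation of a bivariate polynomial at a point `(x, y)`. -/
noncomputable def polyEval {L : Type} [Field L] (f : (ℕ × ℕ) →₀ L) (x y : L) : L :=
  ∑ m ∈ f.support, f m * x ^ m.1 * y ^ m.2

/-- The syndrome table afforded by `τ` and `e`:  `u_n = e(α^(τ+n))`. -/
noncomputable def synTable {F L : Type} [Field F] [Field L] [Algebra F L] {r₁ r₂ : ℕ}
    (α₁ α₂ : L) (τ : Fin r₁ × Fin r₂) (e : Fin r₁ × Fin r₂ → F) : ℕ × ℕ → L :=
  fun n => ∑ p : Fin r₁ × Fin r₂,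
    algebraMap F L (e p) * (α₁ ^ ((τ.1 : ℕ) + n.1)) ^ (p.1 : ℕ)
      * (α₂ ^ ((τ.2 : ℕ) + n.2)) ^ (p.2 : ℕ)

/-- The weight ω(e): number of nonzero coefficients. -/
noncomputable def wt {F : Type} [Field F] {r₁ r₂ : ℕ} (e : Fin r₁ × Fin r₂ → F) : ℕ :=
  {p | e p ≠ 0}.ncard

/-- The hyperbolic set B(δ) of amplitude δ inside {0,…,r₁−1} × {0,…,r₂−1}. -/
def hypB (r₁ r₂ δ : ℕ) : Set (ℕ × ℕ) :=
  {l | l.1 < r₁ ∧ l.2 < r₂ ∧ (l.1 + 1) * (l.2 + 1) ≤ δ ∧ l ≠ (δ - 1, 0) ∧ l ≠ (0, δ - 1)}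

/-- The border set 𝔉 = {l ∈ B(2t+1) : 2t ≤ (l₁+1)(l₂+1)}. -/
def frontF (r₁ r₂ t : ℕ) : Set (ℕ × ℕ) :=
  {l ∈ hypB r₁ r₂ (2 * t + 1) | 2 * t ≤ (l.1 + 1) * (l.2 + 1)}

/-- The lexicographic order with X₁ > X₂. -/
def lexMonOrd : MonOrd where
  le a b := a.1 < b.1 ∨ (a.1 = b.1 ∧ a.2 ≤ b.2)
  refl a := by omega
  trans a b c h1 h2 := by omega
  antisymm a b h1 h2 := by
    obtain ⟨a1, a2⟩ := a; obtain ⟨b1, b2⟩ := b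
    simp_all only [Prod.mk.injEq]; omega
  total a b := by omega
  add_right a b c h := by
    obtain ⟨a1, a2⟩ := a; obtain ⟨b1, b2⟩ := b; obtain ⟨c1, c2⟩ := c
    simp_all only [Prod.mk_add_mk]; omega
  zero_le a := by
    obtain ⟨a1, a2⟩ := a; simp only []; omega

/-- The (reverse) graded order with X₂ > X₁. -/
def grMonOrd : MonOrd where
  le a b := a.1 + a.2 < b.1 + b.2 ∨ (a.1 + a.2 = b.1 + b.2 ∧ a.2 ≤ b.2)
  refl a := by omega
  trans a b c h1 h2 := by omega
  antisymm a b h1 h2 := by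
    obtain ⟨a1, a2⟩ := a; obtain ⟨b1, b2⟩ := b
    simp_all only [Prod.mk.injEq]; omega
  total a b := by omega
  add_right a b c h := by
    obtain ⟨a1, a2⟩ := a; obtain ⟨b1, b2⟩ := b; obtain ⟨c1, c2⟩ := c
    simp_all only [Prod.mk_add_mk]; omega
  zero_le a := by
    obtain ⟨a1, a2⟩ := a; simp only []; omega

/-- The ideal (X₁^{r₁} − 1, X₂^{r₂} − 1) of L[X₁,X₂]. -/
noncomputable def periodIdeal (L : Type) [Field L] (r₁ r₂ : ℕ) :
    Ideal (AddMonoidAlgebra L (ℕ × ℕ)) :=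
  Ideal.span {AddMonoidAlgebra.single (r₁, 0) 1 - 1, AddMonoidAlgebra.single (0, r₂) 1 - 1}

/-- Every nonempty finite set has a maximum w.r.t. a monomial order. -/
lemma monord_exists_max (T : MonOrd) (S : Finset (ℕ × ℕ)) :
    S.Nonempty → ∃ s ∈ S, ∀ m ∈ S, T.le m s := by
  classical
  induction S using Finset.induction_on with
  | empty => intro h; simp at h
  | @insert a S' ha ih =>
    intro _
    by_cases h : S'.Nonempty
    · obtain ⟨s, hs, hmax⟩ := ih h
      rcases T.total a s with h1 | h1
      · refine ⟨s, Finset.mem_insert_of_mem hs, fun m hm => ?_⟩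
        rcases Finset.mem_insert.1 hm with rfl | hm'
        · exact h1
        · exact hmax m hm'
      · refine ⟨a, Finset.mem_insert_self a S', fun m hm => ?_⟩
        rcases Finset.mem_insert.1 hm with rfl | hm'
        · exact T.refl m
        · exact T.trans m s a (hmax m hm') h1
    · rw [Finset.not_nonempty_iff_eq_empty] at h
      subst h
      refine ⟨a, Finset.mem_insert_self a ∅, fun m hm => ?_⟩
      rcases Finset.mem_insert.1 hm with rfl | hm'
      · exact T.refl m
      · simp at hm'

/-- Evaluation of an element of `L[X₁,X₂]` at a point, as an algebra homomorphism. -/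
noncomputable def evalHom {L : Type} [Field L] (x y : L) :
    AddMonoidAlgebra L (ℕ × ℕ) →ₐ[L] L :=
  AddMonoidAlgebra.lift L L (ℕ × ℕ)
    { toFun := fun m => x ^ (Multiplicative.toAdd m).1 * y ^ (Multiplicative.toAdd m).2
      map_one' := by simp
      map_mul' := fun a b => by
        simp only [toAdd_mul, Prod.fst_add, Prod.snd_add, pow_add]
        ring }

lemma evalHom_apply {L : Type} [Field L] (x y : L) (f : AddMonoidAlgebra L (ℕ × ℕ)) :
    evalHom x y f = polyEval f.coeff x y := by
  rw [evalHom, AddMonoidAlgebra.lift_apply]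
  simp [Finsupp.sum, polyEval, smul_eq_mul, mul_assoc]

lemma evalHom_periodIdeal {L : Type} [Field L] {r₁ r₂ : ℕ} {x y : L}
    (hx : x ^ r₁ = 1) (hy : y ^ r₂ = 1)
    {g : AddMonoidAlgebra L (ℕ × ℕ)} (hg : g ∈ periodIdeal L r₁ r₂) :
    evalHom x y g = 0 := by
  have hker : periodIdeal L r₁ r₂ ≤ RingHom.ker (evalHom x y).toRingHom := by
    rw [periodIdeal, Ideal.span_le]
    intro a ha
    simp only [Set.mem_insert_iff, Set.mem_singleton_iff] at ha
    rcases ha with rfl | rfl <;>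
      simp [RingHom.mem_ker, evalHom, hx, hy]
  exact hker hg

/-- The key computation: `f[U]_n` for the syndrome table, expressed via evaluations. -/
lemma fApp_synTable {F L : Type} [Field F] [Field L] [Algebra F L] {r₁ r₂ : ℕ}
    (α₁ α₂ : L) (τ : Fin r₁ × Fin r₂) (e : Fin r₁ × Fin r₂ → F)
    (f : (ℕ × ℕ) →₀ L) (s n : ℕ × ℕ) (h1 : s.1 ≤ n.1) (h2 : s.2 ≤ n.2) :
    fApp (synTable α₁ α₂ τ e) f s n =
      ∑ p : Fin r₁ × Fin r₂,
        algebraMap F L (e p) * polyEval f (α₁ ^ (p.1 : ℕ)) (α₂ ^ (p.2 : ℕ)) *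
          α₁ ^ (((τ.1 : ℕ) + n.1 - s.1) * (p.1 : ℕ)) *
          α₂ ^ (((τ.2 : ℕ) + n.2 - s.2) * (p.2 : ℕ)) := by
  rw [fApp, if_pos ⟨h1, h2⟩]
  simp only [synTable]
  simp_rw [Finset.mul_sum]
  rw [Finset.sum_comm]
  refine Finset.sum_congr rfl fun p _ => ?_
  rw [polyEval, Finset.mul_sum, Finset.sum_mul, Finset.sum_mul]
  refine Finset.sum_congr rfl fun m _ => ?_
  have hm1 : (τ.1 : ℕ) + (m.1 + n.1 - s.1) = m.1 + ((τ.1 : ℕ) + n.1 - s.1) := by omega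
  have hm2 : (τ.2 : ℕ) + (m.2 + n.2 - s.2) = m.2 + ((τ.2 : ℕ) + n.2 - s.2) := by omega
  rw [hm1, hm2]
  ring

/-- If `f` vanishes at all points of `supp e`, then `f[U]_n = 0` for all `n`. -/
lemma fApp_eq_zero_of_vanish {F L : Type} [Field F] [Field L] [Algebra F L] {r₁ r₂ : ℕ}
    (α₁ α₂ : L) (τ : Fin r₁ × Fin r₂) (e : Fin r₁ × Fin r₂ → F)
    (f : (ℕ × ℕ) →₀ L)
    (hv : ∀ p : Fin r₁ × Fin r₂, e p ≠ 0 →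
      polyEval f (α₁ ^ (p.1 : ℕ)) (α₂ ^ (p.2 : ℕ)) = 0)
    (s n : ℕ × ℕ) : fApp (synTable α₁ α₂ τ e) f s n = 0 := by
  by_cases h : s.1 ≤ n.1 ∧ s.2 ≤ n.2
  · rw [fApp_synTable α₁ α₂ τ e f s n h.1 h.2]
    refine Finset.sum_eq_zero fun p _ => ?_
    by_cases hp : e p = 0
    · simp [hp]
    · simp [hv p hp]
  · rw [fApp, if_neg h]

/-- Conversely, if `f[U]_n = 0` for all `n`, then `f` vanishes on `supp e`. -/
lemma vanish_of_fApp_eq_zero {F L : Type} [Field F] [Field L] [Algebra F L] {r₁ r₂ : ℕ}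
    (α₁ α₂ : L) (hα₁ : IsPrimitiveRoot α₁ r₁) (hα₂ : IsPrimitiveRoot α₂ r₂)
    (τ : Fin r₁ × Fin r₂) (e : Fin r₁ × Fin r₂ → F)
    (f : (ℕ × ℕ) →₀ L) (s : ℕ × ℕ)
    (hgen : ∀ n, fApp (synTable α₁ α₂ τ e) f s n = 0)
    (p : Fin r₁ × Fin r₂) (hp : e p ≠ 0) :
    polyEval f (α₁ ^ (p.1 : ℕ)) (α₂ ^ (p.2 : ℕ)) = 0 := by
  classical
  set c : Fin r₁ × Fin r₂ → L :=
    fun p => algebraMap F L (e p) * polyEval f (α₁ ^ (p.1 : ℕ)) (α₂ ^ (p.2 : ℕ)) with hc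
  have H : ∀ a : Fin r₁ × Fin r₂,
      ∑ q : Fin r₁ × Fin r₂,
        c q * α₁ ^ ((a.1 : ℕ) * (q.1 : ℕ)) * α₂ ^ ((a.2 : ℕ) * (q.2 : ℕ)) = 0 := by
    intro a
    have hτ1 : (τ.1 : ℕ) ≤ r₁ := le_of_lt τ.1.isLt
    have hτ2 : (τ.2 : ℕ) ≤ r₂ := le_of_lt τ.2.isLt
    have hk := hgen (s.1 + ((a.1 : ℕ) + r₁ - (τ.1 : ℕ)), s.2 + ((a.2 : ℕ) + r₂ - (τ.2 : ℕ)))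
    rw [fApp_synTable α₁ α₂ τ e f s _ (by simp) (by simp)] at hk
    rw [← hk]
    refine Finset.sum_congr rfl fun q _ => ?_
    have he1 : (τ.1 : ℕ) + (s.1 + ((a.1 : ℕ) + r₁ - (τ.1 : ℕ))) - s.1
        = (a.1 : ℕ) + r₁ := by omega
    have he2 : (τ.2 : ℕ) + (s.2 + ((a.2 : ℕ) + r₂ - (τ.2 : ℕ))) - s.2
        = (a.2 : ℕ) + r₂ := by omega
    have e1 : α₁ ^ (((a.1 : ℕ) + r₁) * (q.1 : ℕ)) = α₁ ^ ((a.1 : ℕ) * (q.1 : ℕ)) := by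
      rw [add_mul, pow_add, pow_mul α₁ r₁ (q.1 : ℕ), hα₁.pow_eq_one, one_pow, mul_one]
    have e2 : α₂ ^ (((a.2 : ℕ) + r₂) * (q.2 : ℕ)) = α₂ ^ ((a.2 : ℕ) * (q.2 : ℕ)) := by
      rw [add_mul, pow_add, pow_mul α₂ r₂ (q.2 : ℕ), hα₂.pow_eq_one, one_pow, mul_one]
    rw [he1, he2, e1, e2]
  -- set up the Kronecker–Vandermonde matrix
  set v₁ : Fin r₁ → L := fun i => α₁ ^ (i : ℕ) with hv₁
  set v₂ : Fin r₂ → L := fun i => α₂ ^ (i : ℕ) with hv₂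
  set M : Matrix (Fin r₁ × Fin r₂) (Fin r₁ × Fin r₂) L :=
    Matrix.kroneckerMap (· * ·) (Matrix.vandermonde v₁) (Matrix.vandermonde v₂) with hM
  have hmv : M.mulVec c = 0 := by
    funext a
    have : M.mulVec c a =
        ∑ q : Fin r₁ × Fin r₂,
          c q * α₁ ^ ((a.1 : ℕ) * (q.1 : ℕ)) * α₂ ^ ((a.2 : ℕ) * (q.2 : ℕ)) := by
      simp only [Matrix.mulVec, dotProduct, hM, Matrix.kroneckerMap_apply,
        Matrix.vandermonde_apply, hv₁, hv₂, ← pow_mul]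
      exact Finset.sum_congr rfl fun q _ => by ring
    rw [this, H a]
    rfl
  have hinj₁ : Function.Injective v₁ := by
    intro i j hij
    exact Fin.ext (hα₁.pow_inj i.isLt j.isLt hij)
  have hinj₂ : Function.Injective v₂ := by
    intro i j hij
    exact Fin.ext (hα₂.pow_inj i.isLt j.isLt hij)
  have hdet₁ : (Matrix.vandermonde v₁).det ≠ 0 := by
    rw [Matrix.det_vandermonde]
    refine Finset.prod_ne_zero_iff.2 fun i _ => ?_
    refine Finset.prod_ne_zero_iff.2 fun j hj => ?_
    exact sub_ne_zero.2 fun h => (Finset.mem_Ioi.1 hj).ne' (hinj₁ h)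
  have hdet₂ : (Matrix.vandermonde v₂).det ≠ 0 := by
    rw [Matrix.det_vandermonde]
    refine Finset.prod_ne_zero_iff.2 fun i _ => ?_
    refine Finset.prod_ne_zero_iff.2 fun j hj => ?_
    exact sub_ne_zero.2 fun h => (Finset.mem_Ioi.1 hj).ne' (hinj₂ h)
  have hdet : M.det ≠ 0 := by
    rw [hM, Matrix.det_kronecker]
    exact mul_ne_zero (pow_ne_zero _ hdet₁) (pow_ne_zero _ hdet₂)
  have hc0 : c = 0 := Matrix.eq_zero_of_mulVec_eq_zero hdet hmv
  have hcp : c p = 0 := by rw [hc0]; rfl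
  rw [hc] at hcp
  rcases mul_eq_zero.1 hcp with h0 | h0
  · exact absurd ((algebraMap F L).injective (by rw [h0, map_zero])) hp
  · exact h0

/-- the image of Λ(U) under the canonical projection
L[X₁,X₂] → L(r₁,r₂) equals the locator ideal L(e). -/
theorem projection_of_lambda_eq_locator
    (q : ℕ) (hq : IsPrimePow q)
    (F : Type) [Field F] [Fintype F] (hF : Fintype.card F = q)
    (L : Type) [Field L] [Algebra F L]
    (r₁ r₂ : ℕ) (hr₁ : 0 < r₁) (hr₂ : 0 < r₂) (hco : Nat.Coprime q (r₁ * r₂))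
    (α₁ α₂ : L) (hα₁ : IsPrimitiveRoot α₁ r₁) (hα₂ : IsPrimitiveRoot α₂ r₂)
    (T : MonOrd) (e : Fin r₁ × Fin r₂ → F) (τ : Fin r₁ × Fin r₂)
    (U : ℕ × ℕ → L) (hU : U = synTable α₁ α₂ τ e) :
    Ideal.Quotient.mk (periodIdeal L r₁ r₂) ''
        {f : AddMonoidAlgebra L (ℕ × ℕ) | GeneratesU T U f.coeff ∨ f = 0} =
      {g : AddMonoidAlgebra L (ℕ × ℕ) ⧸ periodIdeal L r₁ r₂ |
        ∀ h : AddMonoidAlgebra L (ℕ × ℕ), Ideal.Quotient.mk (periodIdeal L r₁ r₂) h = g →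
          ∀ p : Fin r₁ × Fin r₂, e p ≠ 0 →
            polyEval h.coeff (α₁ ^ (p.1 : ℕ)) (α₂ ^ (p.2 : ℕ)) = 0} := by
  classical
  subst hU
  ext g
  simp only [Set.mem_image, Set.mem_setOf_eq]
  constructor
  · rintro ⟨f, hf, rfl⟩
    intro h hh p hp
    have hmem : h - f ∈ periodIdeal L r₁ r₂ := Ideal.Quotient.eq.1 hh
    have hx : (α₁ ^ (p.1 : ℕ)) ^ r₁ = 1 := by
      rw [← pow_mul, mul_comm, pow_mul, hα₁.pow_eq_one, one_pow]
    have hy : (α₂ ^ (p.2 : ℕ)) ^ r₂ = 1 := by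
      rw [← pow_mul, mul_comm, pow_mul, hα₂.pow_eq_one, one_pow]
    have h0 : evalHom (α₁ ^ (p.1 : ℕ)) (α₂ ^ (p.2 : ℕ)) (h - f) = 0 :=
      evalHom_periodIdeal hx hy hmem
    rw [map_sub, evalHom_apply, evalHom_apply, sub_eq_zero] at h0
    have hfv : polyEval f.coeff (α₁ ^ (p.1 : ℕ)) (α₂ ^ (p.2 : ℕ)) = 0 := by
      rcases hf with hgen | rfl
      · obtain ⟨s, _, hall⟩ := hgen
        exact vanish_of_fApp_eq_zero α₁ α₂ hα₁ hα₂ τ e f.coeff s hall p hp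
      · simp [polyEval]
    rw [h0, hfv]
  · intro hg
    obtain ⟨h, rfl⟩ := Ideal.Quotient.mk_surjective g
    refine ⟨h, ?_, rfl⟩
    have hv := hg h rfl
    by_cases hz : h = 0
    · exact Or.inr hz
    · refine Or.inl ?_
      obtain ⟨s, hs, hmax⟩ :=
        monord_exists_max T h.coeff.support (Finsupp.support_nonempty_iff.2
          fun h0 => hz (by rw [← AddMonoidAlgebra.ofCoeff_coeff h, h0]; rfl))
      exact ⟨s, ⟨hs, hmax⟩, fun n => fApp_eq_zero_of_vanish α₁ α₂ τ e h.coeff hv s n⟩
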